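/- For the random scan componentwise accept-reject-based Markov kernel P_RS with M components, selection probabilities λ_k ∈ (0,1) summing to 1, and componentwise acceptance probabilities A_{θ^{(−k)}}(θ^k), for any t ∈ ℤ₊ and any θ = (θ¹,…,θ^M) ∈ Θ: ‖P_RS^t(θ,·) − Π‖_TV ≥ ( 1 − Σ_{k=1}^M λ_k A_{θ^{(−k)}}(θ^k) )^t. -/

import Mathlib

open MeasureTheory

/-- The componentwise acceptance probability `A_{θ^{(−k)}}(θ^k) = ∫ a_k(θ,x) q_k(θ,x) dλ_k(x)`,
where the acceptance function and proposal density of the `k`-th component may depend on the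
remaining components `θ^{(−k)}`. -/
noncomputable def compAcceptProb {M : ℕ} {Ωk : Fin M → Type*}
    [∀ k, MeasurableSpace (Ωk k)] (lamk : ∀ k, Measure (Ωk k))
    (a q : (k : Fin M) → (∀ j, Ωk j) → Ωk k → ℝ) (k : Fin M) (θ : ∀ j, Ωk j) : ℝ :=
  ∫ x, a k θ x * q k θ x ∂(lamk k)

/-- The accept-reject-based kernel for the `k`-th component, targeting the full
conditional of the `k`-th coordinate given `θ^{(−k)}`. -/
noncomputable def compKernel {M : ℕ} {Ωk : Fin M → Type*}
    [∀ k, MeasurableSpace (Ωk k)] (lamk : ∀ k, Measure (Ωk k))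
    (a q : (k : Fin M) → (∀ j, Ωk j) → Ωk k → ℝ) (k : Fin M) (θ : ∀ j, Ωk j) :
    Measure (Ωk k) :=
  (lamk k).withDensity (fun x => ENNReal.ofReal (a k θ x * q k θ x)) +
    ENNReal.ofReal (1 - compAcceptProb lamk a q k θ) • Measure.dirac (θ k)

/-- The random scan componentwise ARB kernel
`P_RS(θ, ∏_k B^k) = Σ_k λ_k P_{θ^{(−k)}}(θ^k, B^k) ∏_{j≠k} δ_{θ^j}(B^j)`. -/
noncomputable def rsKernel {M : ℕ} {Ωk : Fin M → Type*}
    [∀ k, MeasurableSpace (Ωk k)] (sel : Fin M → ℝ) (lamk : ∀ k, Measure (Ωk k))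
    (a q : (k : Fin M) → (∀ j, Ωk j) → Ωk k → ℝ) (θ : ∀ j, Ωk j) :
    Measure (∀ j, Ωk j) :=
  ∑ k, ENNReal.ofReal (sel k) •
    (compKernel lamk a q k θ).map (fun x => Function.update θ k x)

/-- The `t`-step iterate `P^t(θ,·)` of a Markov kernel, with `P^0(θ,·) = δ_θ`. -/
noncomputable def iterK {Ω : Type*} [MeasurableSpace Ω] (P : Ω → Measure Ω) :
    ℕ → Ω → Measure Ω
  | 0 => fun θ => Measure.dirac θ
  | (t + 1) => fun θ => (iterK P t θ).bind P

/-- Total variation distance: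
`‖μ − ν‖_TV = sup { ∫ f dμ − ∫ f dν : f measurable, 0 ≤ f ≤ 1 }`. -/
noncomputable def tvDist {Ω : Type*} [MeasurableSpace Ω] (μ ν : Measure Ω) : ℝ :=
  ⨆ f : {f : Ω → ℝ // Measurable f ∧ ∀ x, f x ∈ Set.Icc (0:ℝ) 1},
    (∫ x, f.1 x ∂μ - ∫ x, f.1 x ∂ν)

section Aux

open MeasureTheory
open scoped ENNReal NNReal

variable {M : ℕ} {Ωk : Fin M → Type*} [∀ k, MeasurableSpace (Ωk k)]
  {lamk : ∀ k, Measure (Ωk k)} [∀ k, SigmaFinite (lamk k)]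
  {a q : (k : Fin M) → (∀ j, Ωk j) → Ωk k → ℝ}

lemma aux_q_int (hq1 : ∀ k θ, ∫ x, q k θ x ∂(lamk k) = 1) (k : Fin M) (θ : ∀ j, Ωk j) :
    Integrable (fun x => q k θ x) (lamk k) := by
  by_contra h
  have h1 := hq1 k θ
  rw [integral_undef h] at h1
  norm_num at h1

lemma aux_aq_int (hqm : ∀ k, Measurable (fun p : (∀ j, Ωk j) × Ωk k => q k p.1 p.2))
    (ham : ∀ k, Measurable (fun p : (∀ j, Ωk j) × Ωk k => a k p.1 p.2))
    (ha01 : ∀ k θ x, a k θ x ∈ Set.Icc (0:ℝ) 1) (hq0 : ∀ k θ x, 0 ≤ q k θ x)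
    (hq1 : ∀ k θ, ∫ x, q k θ x ∂(lamk k) = 1) (k : Fin M) (θ : ∀ j, Ωk j) :
    Integrable (fun x => a k θ x * q k θ x) (lamk k) := by
  refine (aux_q_int hq1 k θ).mono ?_ (Filter.Eventually.of_forall fun x => ?_)
  · exact (((ham k).comp measurable_prodMk_left).mul
      ((hqm k).comp measurable_prodMk_left)).aestronglyMeasurable
  · have h0 : 0 ≤ a k θ x * q k θ x := mul_nonneg (ha01 k θ x).1 (hq0 k θ x)
    rw [Real.norm_of_nonneg h0, Real.norm_of_nonneg (hq0 k θ x)]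
    exact mul_le_of_le_one_left (hq0 k θ x) (ha01 k θ x).2

lemma aux_A_nonneg (ha01 : ∀ k θ x, a k θ x ∈ Set.Icc (0:ℝ) 1) (hq0 : ∀ k θ x, 0 ≤ q k θ x)
    (k : Fin M) (θ : ∀ j, Ωk j) : 0 ≤ compAcceptProb lamk a q k θ :=
  integral_nonneg fun x => mul_nonneg (ha01 k θ x).1 (hq0 k θ x)

lemma aux_A_le_one (hqm : ∀ k, Measurable (fun p : (∀ j, Ωk j) × Ωk k => q k p.1 p.2))
    (ham : ∀ k, Measurable (fun p : (∀ j, Ωk j) × Ωk k => a k p.1 p.2))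
    (ha01 : ∀ k θ x, a k θ x ∈ Set.Icc (0:ℝ) 1) (hq0 : ∀ k θ x, 0 ≤ q k θ x)
    (hq1 : ∀ k θ, ∫ x, q k θ x ∂(lamk k) = 1) (k : Fin M) (θ : ∀ j, Ωk j) :
    compAcceptProb lamk a q k θ ≤ 1 := by
  rw [← hq1 k θ]
  exact integral_mono (aux_aq_int hqm ham ha01 hq0 hq1 k θ) (aux_q_int hq1 k θ)
    fun x => mul_le_of_le_one_left (hq0 k θ x) (ha01 k θ x).2

lemma aux_A_meas (hqm : ∀ k, Measurable (fun p : (∀ j, Ωk j) × Ωk k => q k p.1 p.2))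
    (ham : ∀ k, Measurable (fun p : (∀ j, Ωk j) × Ωk k => a k p.1 p.2)) (k : Fin M) :
    Measurable (fun θ => compAcceptProb lamk a q k θ) := by
  have h : StronglyMeasurable (fun p : (∀ j, Ωk j) × Ωk k => a k p.1 p.2 * q k p.1 p.2) :=
    ((ham k).mul (hqm k)).stronglyMeasurable
  show Measurable fun θ => ∫ x, a k θ x * q k θ x ∂(lamk k)
  exact (MeasureTheory.StronglyMeasurable.integral_prod_right' (ν := lamk k) h).measurable

lemma aux_comp_univ (hqm : ∀ k, Measurable (fun p : (∀ j, Ωk j) × Ωk k => q k p.1 p.2))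
    (ham : ∀ k, Measurable (fun p : (∀ j, Ωk j) × Ωk k => a k p.1 p.2))
    (ha01 : ∀ k θ x, a k θ x ∈ Set.Icc (0:ℝ) 1) (hq0 : ∀ k θ x, 0 ≤ q k θ x)
    (hq1 : ∀ k θ, ∫ x, q k θ x ∂(lamk k) = 1) (k : Fin M) (θ : ∀ j, Ωk j) :
    compKernel lamk a q k θ Set.univ = 1 := by
  have hA0 := aux_A_nonneg (lamk := lamk) ha01 hq0 k θ
  have hA1 := aux_A_le_one hqm ham ha01 hq0 hq1 k θ
  have hli : ∫⁻ x, ENNReal.ofReal (a k θ x * q k θ x) ∂(lamk k)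
      = ENNReal.ofReal (compAcceptProb lamk a q k θ) := by
    rw [compAcceptProb, ofReal_integral_eq_lintegral_ofReal
      (aux_aq_int hqm ham ha01 hq0 hq1 k θ)
      (Filter.Eventually.of_forall fun x => mul_nonneg (ha01 k θ x).1 (hq0 k θ x))]
  rw [compKernel, Measure.add_apply, Measure.smul_apply, smul_eq_mul,
    withDensity_apply _ MeasurableSet.univ, Measure.restrict_univ, hli,
    Measure.dirac_apply_of_mem (Set.mem_univ _), mul_one,
    ← ENNReal.ofReal_add hA0 (by linarith)]
  norm_num

lemma aux_rs_univ {sel : Fin M → ℝ}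
    (hqm : ∀ k, Measurable (fun p : (∀ j, Ωk j) × Ωk k => q k p.1 p.2))
    (ham : ∀ k, Measurable (fun p : (∀ j, Ωk j) × Ωk k => a k p.1 p.2))
    (ha01 : ∀ k θ x, a k θ x ∈ Set.Icc (0:ℝ) 1) (hq0 : ∀ k θ x, 0 ≤ q k θ x)
    (hq1 : ∀ k θ, ∫ x, q k θ x ∂(lamk k) = 1)
    (hsel0 : ∀ k, 0 ≤ sel k) (hsum : ∑ k, sel k = 1) (θ : ∀ j, Ωk j) :
    rsKernel sel lamk a q θ Set.univ = 1 := by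
  rw [rsKernel, Measure.finset_sum_apply]
  have : ∀ k : Fin M, (ENNReal.ofReal (sel k) •
      (compKernel lamk a q k θ).map (fun x => Function.update θ k x)) Set.univ
      = ENNReal.ofReal (sel k) := by
    intro k
    rw [Measure.smul_apply, smul_eq_mul,
      Measure.map_apply (measurable_update θ) MeasurableSet.univ, Set.preimage_univ,
      aux_comp_univ hqm ham ha01 hq0 hq1 k θ, mul_one]
  rw [Finset.sum_congr rfl fun k _ => this k, ← ENNReal.ofReal_sum_of_nonneg
    fun k _ => hsel0 k, hsum, ENNReal.ofReal_one]

lemma aux_rs_meas {sel : Fin M → ℝ}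
    (hqm : ∀ k, Measurable (fun p : (∀ j, Ωk j) × Ωk k => q k p.1 p.2))
    (ham : ∀ k, Measurable (fun p : (∀ j, Ωk j) × Ωk k => a k p.1 p.2)) :
    Measurable (rsKernel sel lamk a q) := by
  apply Measure.measurable_of_measurable_coe
  intro s hs
  have hco : ∀ k : Fin M, Measurable (fun θ : ∀ j, Ωk j =>
      ((compKernel lamk a q k θ).map (fun x => Function.update θ k x)) s) := by
    intro k
    have heq : ∀ θ : ∀ j, Ωk j,
        ((compKernel lamk a q k θ).map (fun x => Function.update θ k x)) s
        = (∫⁻ x, (Set.indicator s (1 : (∀ j, Ωk j) → ℝ≥0∞) (Function.update θ k x))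
              * ENNReal.ofReal (a k θ x * q k θ x) ∂(lamk k))
          + ENNReal.ofReal (1 - compAcceptProb lamk a q k θ)
              * Set.indicator s (1 : (∀ j, Ωk j) → ℝ≥0∞) θ := by
      intro θ
      have hB : MeasurableSet ((fun x => Function.update θ k x) ⁻¹' s) :=
        (measurable_update θ) hs
      rw [Measure.map_apply (measurable_update θ) hs, compKernel, Measure.add_apply,
        Measure.smul_apply, smul_eq_mul, withDensity_apply _ hB,
        Measure.dirac_apply' _ hB]
      congr 1
      · rw [← lintegral_indicator hB]
        congr 1
        funext x
        by_cases hx : Function.update θ k x ∈ s <;>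
          simp [Set.indicator_apply, hx]
      · have hiff : θ k ∈ (fun x => Function.update θ k x) ⁻¹' s ↔ θ ∈ s := by
          simp [Function.update_eq_self]
        by_cases hθ' : θ ∈ s
        · simp [Set.indicator_of_mem hθ', Set.indicator_of_mem (hiff.mpr hθ')]
        · simp [Set.indicator_of_notMem hθ',
            Set.indicator_of_notMem (fun hh => hθ' (hiff.mp hh))]
    simp only [heq]
    refine Measurable.add ?_ ?_
    · apply Measurable.lintegral_prod_right'
        (f := fun p : (∀ j, Ωk j) × Ωk k =>
          (Set.indicator s (1 : (∀ j, Ωk j) → ℝ≥0∞) (Function.update p.1 k p.2))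
            * ENNReal.ofReal (a k p.1 p.2 * q k p.1 p.2))
      exact ((measurable_one.indicator hs).comp measurable_update').mul
        (ENNReal.measurable_ofReal.comp ((ham k).mul (hqm k)))
    · exact (ENNReal.measurable_ofReal.comp
        (measurable_const.sub (aux_A_meas hqm ham k))).mul (measurable_one.indicator hs)
  have : (fun θ => rsKernel sel lamk a q θ s)
      = fun θ => ∑ k : Fin M, ENNReal.ofReal (sel k) *
          ((compKernel lamk a q k θ).map (fun x => Function.update θ k x)) s := by
    funext θ
    rw [rsKernel, Measure.finset_sum_apply]
    exact Finset.sum_congr rfl fun k _ => by rw [Measure.smul_apply, smul_eq_mul]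
  rw [this]
  exact Finset.measurable_sum _ fun k _ => (hco k).const_mul _

lemma aux_rs_self {sel : Fin M → ℝ}
    (hqm : ∀ k, Measurable (fun p : (∀ j, Ωk j) × Ωk k => q k p.1 p.2))
    (ham : ∀ k, Measurable (fun p : (∀ j, Ωk j) × Ωk k => a k p.1 p.2))
    (ha01 : ∀ k θ x, a k θ x ∈ Set.Icc (0:ℝ) 1) (hq0 : ∀ k θ x, 0 ≤ q k θ x)
    (hq1 : ∀ k θ, ∫ x, q k θ x ∂(lamk k) = 1)
    (hsel0 : ∀ k, 0 ≤ sel k) (hsum : ∑ k, sel k = 1)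
    {θ : ∀ j, Ωk j} (hθs : MeasurableSet ({θ} : Set (∀ j, Ωk j))) :
    ENNReal.ofReal (1 - ∑ k, sel k * compAcceptProb lamk a q k θ)
      ≤ rsKernel sel lamk a q θ {θ} := by
  have hterm : ∀ k : Fin M, ENNReal.ofReal (sel k * (1 - compAcceptProb lamk a q k θ))
      ≤ (ENNReal.ofReal (sel k) •
          (compKernel lamk a q k θ).map (fun x => Function.update θ k x)) {θ} := by
    intro k
    rw [Measure.smul_apply, smul_eq_mul, Measure.map_apply (measurable_update θ) hθs,
      ENNReal.ofReal_mul (hsel0 k)]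
    refine mul_le_mul_right ?_ _
    have hmem : θ k ∈ (fun x => Function.update θ k x) ⁻¹' {θ} := by
      simp [Function.update_eq_self]
    calc ENNReal.ofReal (1 - compAcceptProb lamk a q k θ)
        = ENNReal.ofReal (1 - compAcceptProb lamk a q k θ)
            * Measure.dirac (θ k) ((fun x => Function.update θ k x) ⁻¹' {θ}) := by
          rw [Measure.dirac_apply_of_mem hmem, mul_one]
      _ ≤ compKernel lamk a q k θ ((fun x => Function.update θ k x) ⁻¹' {θ}) := by
          rw [compKernel, Measure.add_apply, Measure.smul_apply, smul_eq_mul]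
          exact le_add_self
  calc ENNReal.ofReal (1 - ∑ k, sel k * compAcceptProb lamk a q k θ)
      = ENNReal.ofReal (∑ k, sel k * (1 - compAcceptProb lamk a q k θ)) := by
        congr 1
        rw [Finset.sum_congr rfl fun k _ => mul_one_sub (sel k) _, Finset.sum_sub_distrib,
          hsum]
    _ = ∑ k, ENNReal.ofReal (sel k * (1 - compAcceptProb lamk a q k θ)) :=
        ENNReal.ofReal_sum_of_nonneg fun k _ => mul_nonneg (hsel0 k)
          (by linarith [aux_A_le_one hqm ham ha01 hq0 hq1 k θ])
    _ ≤ ∑ k, (ENNReal.ofReal (sel k) •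
          (compKernel lamk a q k θ).map (fun x => Function.update θ k x)) {θ} :=
        Finset.sum_le_sum fun k _ => hterm k
    _ = rsKernel sel lamk a q θ {θ} := by rw [rsKernel, Measure.finset_sum_apply]

lemma aux_iterK_univ_le {Ω : Type*} [MeasurableSpace Ω] {P : Ω → Measure Ω}
    (hP : Measurable P) (hmass : ∀ x, P x Set.univ ≤ 1) (θ : Ω) :
    ∀ t, iterK P t θ Set.univ ≤ 1
  | 0 => by simp [iterK]
  | (t+1) => by
    show (iterK P t θ).bind P Set.univ ≤ 1
    rw [Measure.bind_apply MeasurableSet.univ hP.aemeasurable]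
    calc ∫⁻ x, P x Set.univ ∂(iterK P t θ)
        ≤ ∫⁻ _, 1 ∂(iterK P t θ) := lintegral_mono fun x => hmass x
      _ = iterK P t θ Set.univ := lintegral_one
      _ ≤ 1 := aux_iterK_univ_le hP hmass θ t

lemma aux_iterK_singleton {Ω : Type*} [MeasurableSpace Ω] {P : Ω → Measure Ω}
    (hP : Measurable P) {θ : Ω} (hθs : MeasurableSet ({θ} : Set Ω)) {c : ℝ≥0∞}
    (hc : c ≤ P θ {θ}) : ∀ t, c ^ t ≤ iterK P t θ {θ}
  | 0 => by simp [iterK, Measure.dirac_apply_of_mem (Set.mem_singleton θ)]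
  | (t+1) => by
    show c ^ (t+1) ≤ (iterK P t θ).bind P {θ}
    rw [Measure.bind_apply hθs hP.aemeasurable, pow_succ]
    calc c ^ t * c ≤ iterK P t θ {θ} * c :=
          mul_le_mul_left (aux_iterK_singleton hP hθs hc t) c
      _ = ∫⁻ x, Set.indicator {θ} (fun _ => c) x ∂(iterK P t θ) := by
          rw [lintegral_indicator_const hθs, mul_comm]
      _ ≤ ∫⁻ x, P x {θ} ∂(iterK P t θ) := by
          refine lintegral_mono fun x => ?_
          by_cases hx : x ∈ ({θ} : Set Ω)
          · rw [Set.indicator_of_mem hx]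
            rcases hx with rfl
            exact hc
          · rw [Set.indicator_of_notMem hx]
            exact zero_le

end Aux

/-- Theorem 6: for the random scan componentwise ARB Markov kernel, for any `t ∈ ℤ₊` and
any `θ ∈ Θ`, `‖P_RS^t(θ,·) − Π‖_TV ≥ (1 − Σ_k λ_k A_{θ^{(−k)}}(θ^k))^t`. -/
theorem rs_arb_tv_lower_bound
    {M : ℕ} (hM : 0 < M) {Ωk : Fin M → Type*} [∀ k, MeasurableSpace (Ωk k)]
    (lam : Measure (∀ j, Ωk j)) [SigmaFinite lam]
    (Pi : Measure (∀ j, Ωk j)) [IsProbabilityMeasure Pi]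
    (Θk : ∀ k, Set (Ωk k)) (hne : ∀ k, (Θk k).Nonempty)
    (hmeasΘ : ∀ k, MeasurableSet (Θk k))
    (pi : (∀ j, Ωk j) → ℝ) (hpim : Measurable pi)
    (hdens : Pi = lam.withDensity (fun x => ENNReal.ofReal (pi x)))
    (hpos : ∀ θ ∈ Set.pi Set.univ Θk, 0 < pi θ)
    (hzero : ∀ θ ∉ Set.pi Set.univ Θk, pi θ = 0)
    (hsing : ∀ θ ∈ Set.pi Set.univ Θk, MeasurableSet {θ} ∧ lam {θ} = 0)
    (lamk : ∀ k, Measure (Ωk k)) [∀ k, SigmaFinite (lamk k)]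
    (a q : (k : Fin M) → (∀ j, Ωk j) → Ωk k → ℝ)
    (ham : ∀ k, Measurable (fun p : (∀ j, Ωk j) × Ωk k => a k p.1 p.2))
    (hqm : ∀ k, Measurable (fun p : (∀ j, Ωk j) × Ωk k => q k p.1 p.2))
    (ha01 : ∀ k θ x, a k θ x ∈ Set.Icc (0:ℝ) 1)
    (hq0 : ∀ k θ x, 0 ≤ q k θ x) (hq1 : ∀ k θ, ∫ x, q k θ x ∂(lamk k) = 1)
    (sel : Fin M → ℝ) (hsel : ∀ k, sel k ∈ Set.Ioo (0:ℝ) 1) (hsum : ∑ k, sel k = 1)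
    (hinv : Pi.bind (rsKernel sel lamk a q) = Pi)
    (t : ℕ) (ht : 1 ≤ t) (θ : ∀ j, Ωk j) (hθ : θ ∈ Set.pi Set.univ Θk) :
    (1 - ∑ k, sel k * compAcceptProb lamk a q k θ) ^ t ≤
      tvDist (iterK (rsKernel sel lamk a q) t θ) Pi := by
  classical
  have hsel0 : ∀ k, 0 ≤ sel k := fun k => (hsel k).1.le
  have hθs : MeasurableSet ({θ} : Set (∀ j, Ωk j)) := (hsing θ hθ).1
  have hPmeas : Measurable (rsKernel sel lamk a q) := aux_rs_meas hqm ham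
  have hPmass : ∀ x, rsKernel sel lamk a q x Set.univ ≤ 1 := fun x =>
    le_of_eq (aux_rs_univ hqm ham ha01 hq0 hq1 hsel0 hsum x)
  set s0 : ℝ := 1 - ∑ k, sel k * compAcceptProb lamk a q k θ with hs0def
  have hs0 : 0 ≤ s0 := by
    have h : ∑ k, sel k * compAcceptProb lamk a q k θ ≤ ∑ k, sel k :=
      Finset.sum_le_sum fun k _ => mul_le_of_le_one_right (hsel0 k)
        (aux_A_le_one hqm ham ha01 hq0 hq1 k θ)
    rw [hsum] at h
    rw [hs0def]
    linarith
  have hkey : ENNReal.ofReal s0 ^ t ≤ iterK (rsKernel sel lamk a q) t θ {θ} :=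
    aux_iterK_singleton hPmeas hθs (aux_rs_self hqm ham ha01 hq0 hq1 hsel0 hsum hθs) t
  set μ := iterK (rsKernel sel lamk a q) t θ with hμ
  have hμuniv : μ Set.univ ≤ 1 := aux_iterK_univ_le hPmeas hPmass θ t
  haveI : IsFiniteMeasure μ := ⟨lt_of_le_of_lt hμuniv ENNReal.one_lt_top⟩
  have hμfin : μ {θ} ≠ ⊤ :=
    (((measure_mono (Set.subset_univ _)).trans hμuniv).trans_lt ENNReal.one_lt_top).ne
  have hPiθ : Pi ({θ} : Set (∀ j, Ωk j)) = 0 := by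
    rw [hdens, withDensity_apply _ hθs, Measure.restrict_eq_zero.mpr (hsing θ hθ).2,
      lintegral_zero_measure]
  set f : (∀ j, Ωk j) → ℝ := Set.indicator {θ} (fun _ => (1:ℝ)) with hf
  have hfm : Measurable f := measurable_const.indicator hθs
  have hf01 : ∀ x, f x ∈ Set.Icc (0:ℝ) 1 := fun x => by
    rw [hf, Set.indicator_apply]; split_ifs <;> norm_num
  have hμint : ∫ x, f x ∂μ = (μ {θ}).toReal := by
    rw [hf, integral_indicator_const (1:ℝ) hθs, smul_eq_mul, mul_one]
    rfl
  have hPiint : ∫ x, f x ∂Pi = 0 := by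
    rw [hf, integral_indicator_const (1:ℝ) hθs, Measure.real, hPiθ]
    simp
  have hbdd : BddAbove (Set.range fun g : {g : (∀ j, Ωk j) → ℝ //
      Measurable g ∧ ∀ x, g x ∈ Set.Icc (0:ℝ) 1} =>
        (∫ x, g.1 x ∂μ - ∫ x, g.1 x ∂Pi)) := by
    refine ⟨1, ?_⟩
    rintro x ⟨g, rfl⟩
    show ∫ x, g.1 x ∂μ - ∫ x, g.1 x ∂Pi ≤ 1
    have h2 : (0:ℝ) ≤ ∫ x, g.1 x ∂Pi := integral_nonneg fun x => (g.2.2 x).1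
    have h1 : ∫ x, g.1 x ∂μ ≤ 1 := by
      by_cases hint : Integrable g.1 μ
      · calc ∫ x, g.1 x ∂μ ≤ ∫ _, (1:ℝ) ∂μ :=
              integral_mono hint (integrable_const 1) fun x => (g.2.2 x).2
          _ = (μ Set.univ).toReal := by simp [integral_const]; rfl
          _ ≤ 1 := by
              have h3 := ENNReal.toReal_mono ENNReal.one_ne_top hμuniv
              simpa using h3
      · rw [integral_undef hint]
        norm_num
    linarith
  have hterm : s0 ^ t ≤ ∫ x, f x ∂μ - ∫ x, f x ∂Pi := by
    rw [hμint, hPiint, sub_zero]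
    have h1 : ENNReal.ofReal (s0 ^ t) ≤ μ {θ} := by
      rw [ENNReal.ofReal_pow hs0]
      exact hkey
    calc s0 ^ t = (ENNReal.ofReal (s0 ^ t)).toReal :=
          (ENNReal.toReal_ofReal (pow_nonneg hs0 t)).symm
      _ ≤ (μ {θ}).toReal := ENNReal.toReal_mono hμfin h1
  calc s0 ^ t ≤ ∫ x, f x ∂μ - ∫ x, f x ∂Pi := hterm
    _ ≤ tvDist μ Pi := le_ciSup hbdd ⟨f, hfm, hf01⟩
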